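/- Let R be a commutative ring and M a finitely generated R-module. If for every R-module N the natural map M ⊗_R N → Hom_R(M*, N) is injective, then M is a projective R-module. -/

import Mathlib

open TensorProduct

/-- The natural map `M ⊗ N → Hom(M*, N)`, `m ⊗ n ↦ (w ↦ w m • n)`. -/
noncomputable def natMap (R : Type*) [CommRing R] (M : Type*) [AddCommGroup M] [Module R M]
    (N : Type*) [AddCommGroup N] [Module R N] :
    M ⊗[R] N →ₗ[R] ((M →ₗ[R] R) →ₗ[R] N) :=
  (dualTensorHom R (Module.Dual R M) N).comp (LinearMap.rTensor N (Module.Dual.eval R M))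

lemma natMap_tmul (R : Type*) [CommRing R] (M : Type*) [AddCommGroup M] [Module R M]
    (N : Type*) [AddCommGroup N] [Module R N] (x : M) (y : N) (w : M →ₗ[R] R) :
    natMap R M N (x ⊗ₜ y) w = w x • y := by
  simp [natMap]

theorem stmt5 (R : Type u) [CommRing R] (M : Type v) [AddCommGroup M] [Module R M]
    [Module.Finite R M]
    (h : ∀ (N : Type v) [AddCommGroup N] [Module R N], Function.Injective (natMap R M N)) :
    Module.Projective R M := by
  classical
  obtain ⟨n, m, hm⟩ := Module.Finite.exists_fin (R := R) (M := M)
  -- the submodule of Mⁿ spanned by tuples (f(m i) • x)_i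
  set S : Submodule R (Fin n → M) :=
    Submodule.span R {v | ∃ (f : Module.Dual R M) (x : M), v = fun i => f (m i) • x} with hS
  -- the bilinear map Rⁿ → Hom(M, Mⁿ/S)
  let Φ : (Fin n → R) →ₗ[R] (M →ₗ[R] ((Fin n → M) ⧸ S)) :=
    LinearMap.mk₂ R (fun r x => S.mkQ (fun i => r i • x))
      (fun r r' x => by
        show S.mkQ (fun i => (r + r') i • x) = S.mkQ (fun i => r i • x) + S.mkQ fun i => r' i • x
        rw [← map_add]; congr 1; funext i; simp [add_smul])
      (fun c r x => by
        show S.mkQ (fun i => (c • r) i • x) = c • S.mkQ fun i => r i • x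
        rw [← map_smul]; congr 1; funext i; simp [mul_smul])
      (fun r x y => by
        show S.mkQ (fun i => r i • (x + y)) = S.mkQ (fun i => r i • x) + S.mkQ fun i => r i • y
        rw [← map_add]; congr 1; funext i; simp [smul_add])
      (fun c r x => by
        show S.mkQ (fun i => r i • c • x) = c • S.mkQ fun i => r i • x
        rw [← map_smul]; congr 1; funext i; rw [Pi.smul_apply, smul_comm])
  set E : Submodule R (Fin n → R) := LinearMap.ker Φ with hE
  haveI : Small.{v} ((Fin n → R) ⧸ E) :=
    small_of_injective (f := fun q => (Φ.quotKerEquivRange q : M →ₗ[R] ((Fin n → M) ⧸ S)))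
      (Subtype.val_injective.comp Φ.quotKerEquivRange.injective)
  set N := Shrink.{v} ((Fin n → R) ⧸ E) with hN
  let e : N ≃ₗ[R] ((Fin n → R) ⧸ E) := Shrink.linearEquiv R _
  set θ : M ⊗[R] N :=
    ∑ i, m i ⊗ₜ (e.symm (Submodule.Quotient.mk (Pi.single i (1 : R)))) with hθ
  have key : ∀ w : M →ₗ[R] R,
      natMap R M N θ w = e.symm (Submodule.Quotient.mk (fun i => w (m i))) := by
    intro w
    have h1 : (fun i => w (m i))
        = ∑ i : Fin n, w (m i) • (Pi.single (M := fun _ => R) i 1) := by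
      funext j
      simp [Pi.single_apply, Finset.sum_ite_eq]
    rw [hθ, map_sum, h1]
    simp only [LinearMap.coe_sum, Finset.sum_apply, natMap_tmul,
      ← Submodule.mkQ_apply, map_sum, map_smul]
  have hker : natMap R M N θ = 0 := by
    refine LinearMap.ext fun w => ?_
    have hmem : (fun i => w (m i)) ∈ E := by
      rw [hE, LinearMap.mem_ker]
      refine LinearMap.ext fun x => ?_
      show S.mkQ (fun i => w (m i) • x) = 0
      rw [Submodule.mkQ_apply, Submodule.Quotient.mk_eq_zero]
      exact Submodule.subset_span ⟨w, x, rfl⟩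
    rw [key w, (Submodule.Quotient.mk_eq_zero E).2 hmem, map_zero, LinearMap.zero_apply]
  have hθ0 : θ = 0 := h N (by rw [hker, map_zero])
  -- push θ down to Mⁿ/S
  let L : ((Fin n → R) ⧸ E) →ₗ[R] (M →ₗ[R] ((Fin n → M) ⧸ S)) := Submodule.liftQ E Φ le_rfl
  let Ψ : M ⊗[R] N →ₗ[R] ((Fin n → M) ⧸ S) :=
    TensorProduct.lift (L.comp e.toLinearMap).flip
  have hΨθ : Ψ θ = Submodule.Quotient.mk m := by
    rw [hθ, map_sum]
    have key2 : ∀ i, Ψ (m i ⊗ₜ e.symm (Submodule.Quotient.mk (Pi.single i (1 : R))))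
        = Submodule.Quotient.mk (Pi.single i (m i)) := by
      intro i
      show (L.comp e.toLinearMap).flip (m i) (e.symm (Submodule.Quotient.mk (Pi.single i 1)))
        = Submodule.Quotient.mk (Pi.single i (m i))
      rw [LinearMap.flip_apply, LinearMap.comp_apply, LinearEquiv.coe_coe,
        LinearEquiv.apply_symm_apply, Submodule.liftQ_apply]
      show S.mkQ (fun j => (Pi.single i (1 : R) : Fin n → R) j • m i)
        = Submodule.Quotient.mk (Pi.single i (m i))
      rw [Submodule.mkQ_apply]
      congr 1
      funext j
      by_cases hj : j = i
      · subst hj; simp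
      · simp [Pi.single_apply, hj]
    rw [Finset.sum_congr rfl fun i _ => key2 i]
    simp only [← Submodule.mkQ_apply, ← map_sum]
    congr 1
    exact Finset.univ_sum_single m
  have hmS : m ∈ S := by
    rw [← Submodule.Quotient.mk_eq_zero, ← hΨθ, hθ0, map_zero]
  rw [hS] at hmS
  obtain ⟨k, c, vs, hsum⟩ := Submodule.mem_span_set'.1 hmS
  choose f x hfx using fun j => (vs j).2
  -- dual basis maps
  let σ : M →ₗ[R] (Fin k → R) := LinearMap.pi fun j => c j • f j
  let p : (Fin k → R) →ₗ[R] M := ∑ j, (LinearMap.proj j).smulRight (x j)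
  have hsplit : p.comp σ = LinearMap.id := by
    apply LinearMap.ext_on hm
    rintro _ ⟨i, rfl⟩
    have hsum_i := congrFun hsum i
    simp only [Finset.sum_apply, Pi.smul_apply] at hsum_i
    simp only [LinearMap.comp_apply, LinearMap.id_apply, σ, p, LinearMap.sum_apply,
      LinearMap.smulRight_apply, LinearMap.proj_apply, LinearMap.pi_apply,
      LinearMap.smul_apply]
    conv_rhs => rw [← hsum_i]
    refine Finset.sum_congr rfl fun j _ => ?_
    rw [hfx j]
    simp only [LinearMap.smul_apply, smul_eq_mul, mul_smul]
  exact Module.Projective.of_split σ p hsplit
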